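/- Fix an integer x ≥ 2. For natural numbers k > x, define E_FPDM(k) = (1 - (1/x)^((k-x+1)/(x-1)))·(1/x)^(1/(x-1)) + (1/x)^((k-x+1)/(x-1))·(1 - (1/k)^((x-1)/(k-1)))·(1/k)^(1/(k-1)) and E_opt(k) = (1/(1+k))^(1/k)·(k/(1+k)). Then the ratio E_FPDM(k)/E_opt(k) tends to (1/x)^(1/(x-1)) as k tends to infinity. -/

import Mathlib

open Filter Real

private lemma aux_log_div : Filter.Tendsto (fun t : ℝ => Real.log t / (t - 1))
    Filter.atTop (nhds 0) := by
  have := Real.tendsto_pow_log_div_mul_add_atTop 1 (-1) 1 one_ne_zero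
  simpa [sub_eq_add_neg] using this

private lemma aux_log_div' : Filter.Tendsto (fun t : ℝ => Real.log (1 + t) / t)
    Filter.atTop (nhds 0) := by
  have h : Filter.Tendsto (fun t : ℝ => 1 + t) Filter.atTop Filter.atTop :=
    tendsto_atTop_add_const_left _ 1 tendsto_id
  have h2 := aux_log_div.comp h
  refine h2.congr fun t => ?_
  simp [Function.comp]

/-- `(1/t)^(c/(t-1)) → 1` as `t → ∞`. -/
private lemma aux_one : ∀ c : ℝ, Filter.Tendsto (fun t : ℝ => (1 / t) ^ (c / (t - 1)))
    Filter.atTop (nhds 1) := by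
  intro c
  have h1 : Filter.Tendsto (fun t : ℝ => Real.exp (-(c * (Real.log t / (t - 1)))))
      Filter.atTop (nhds 1) := by
    have h0 : Filter.Tendsto (fun t : ℝ => -(c * (Real.log t / (t - 1))))
        Filter.atTop (nhds 0) := by
      have := (aux_log_div.const_mul c).neg
      simpa using this
    simpa [Function.comp_def] using (Real.continuous_exp.tendsto 0).comp h0
  refine h1.congr' ?_
  filter_upwards [Filter.eventually_gt_atTop (1 : ℝ)] with t ht
  have ht0 : (0 : ℝ) < 1 / t := by positivity
  rw [Real.rpow_def_of_pos ht0, Real.log_div one_ne_zero (by linarith), Real.log_one]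
  ring_nf

private lemma aux_one' : Filter.Tendsto (fun t : ℝ => (1 / (1 + t)) ^ ((1 : ℝ) / t))
    Filter.atTop (nhds 1) := by
  have h1 : Filter.Tendsto (fun t : ℝ => Real.exp (-(Real.log (1 + t) / t)))
      Filter.atTop (nhds 1) := by
    have h0 : Filter.Tendsto (fun t : ℝ => -(Real.log (1 + t) / t))
        Filter.atTop (nhds 0) := by
      have := aux_log_div'.neg
      simpa using this
    simpa [Function.comp_def] using (Real.continuous_exp.tendsto 0).comp h0
  refine h1.congr' ?_
  filter_upwards [Filter.eventually_gt_atTop (0 : ℝ)] with t ht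
  have ht0 : (0 : ℝ) < 1 / (1 + t) := by positivity
  rw [Real.rpow_def_of_pos ht0, Real.log_div one_ne_zero (by linarith), Real.log_one]
  ring_nf

private lemma aux_ratio : Filter.Tendsto (fun t : ℝ => t / (1 + t))
    Filter.atTop (nhds 1) := by
  have h : Filter.Tendsto (fun t : ℝ => 1 - 1 / (1 + t)) Filter.atTop (nhds 1) := by
    have h2 : Filter.Tendsto (fun t : ℝ => 1 / (1 + t)) Filter.atTop (nhds 0) := by
      apply Filter.Tendsto.div_atTop tendsto_const_nhds
      exact tendsto_atTop_add_const_left _ 1 tendsto_id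
    simpa using (tendsto_const_nhds.sub h2)
  refine h.congr' ?_
  filter_upwards [Filter.eventually_gt_atTop (0 : ℝ)] with t ht
  field_simp
  ring

/-- For a fixed number `x ≥ 2` of neighbours, the ratio `E_FPDM(k) / E_opt(k)`
tends to `(1/x)^(1/(x-1))` as `k → ∞`. -/
theorem stmt_12 (x : ℕ) (hx : 2 ≤ x) :
    Filter.Tendsto
      (fun k : ℕ =>
        ((1 - (1 / (x : ℝ)) ^ (((k : ℝ) - (x : ℝ) + 1) / ((x : ℝ) - 1))) *
              (1 / (x : ℝ)) ^ ((1 : ℝ) / ((x : ℝ) - 1)) +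
            (1 / (x : ℝ)) ^ (((k : ℝ) - (x : ℝ) + 1) / ((x : ℝ) - 1)) *
              (1 - (1 / (k : ℝ)) ^ (((x : ℝ) - 1) / ((k : ℝ) - 1))) *
              (1 / (k : ℝ)) ^ ((1 : ℝ) / ((k : ℝ) - 1))) /
          ((1 / (1 + (k : ℝ))) ^ ((1 : ℝ) / k) * ((k : ℝ) / (1 + (k : ℝ)))))
      Filter.atTop (nhds ((1 / (x : ℝ)) ^ ((1 : ℝ) / ((x : ℝ) - 1)))) := by
  have hx2 : (2 : ℝ) ≤ (x : ℝ) := by exact_mod_cast hx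
  -- the real-variable version
  have main : Filter.Tendsto
      (fun t : ℝ =>
        ((1 - (1 / (x : ℝ)) ^ ((t - (x : ℝ) + 1) / ((x : ℝ) - 1))) *
              (1 / (x : ℝ)) ^ ((1 : ℝ) / ((x : ℝ) - 1)) +
            (1 / (x : ℝ)) ^ ((t - (x : ℝ) + 1) / ((x : ℝ) - 1)) *
              (1 - (1 / t) ^ (((x : ℝ) - 1) / (t - 1))) *
              (1 / t) ^ ((1 : ℝ) / (t - 1))) /
          ((1 / (1 + t)) ^ ((1 : ℝ) / t) * (t / (1 + t))))
      Filter.atTop (nhds ((1 / (x : ℝ)) ^ ((1 : ℝ) / ((x : ℝ) - 1)))) := by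
    have hA : Filter.Tendsto
        (fun t : ℝ => (1 / (x : ℝ)) ^ ((t - (x : ℝ) + 1) / ((x : ℝ) - 1)))
        Filter.atTop (nhds 0) := by
      have hb1 : (1 : ℝ) / (x : ℝ) < 1 := by
        rw [div_lt_one (by linarith)]; linarith
      have hexp : Filter.Tendsto (fun t : ℝ => (t - (x : ℝ) + 1) / ((x : ℝ) - 1))
          Filter.atTop Filter.atTop := by
        refine Filter.Tendsto.atTop_div_const (by linarith) ?_
        exact tendsto_atTop_add_const_right _ 1
          (tendsto_atTop_add_const_right _ (-(x : ℝ)) tendsto_id)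
      exact (tendsto_rpow_atTop_of_base_lt_one _ (neg_one_lt_zero.trans_le (by positivity)) hb1).comp hexp
    have hB := aux_one ((x : ℝ) - 1)
    have hC := aux_one 1
    have hD := aux_one'
    have hE := aux_ratio
    have hnum : Filter.Tendsto
        (fun t : ℝ =>
          (1 - (1 / (x : ℝ)) ^ ((t - (x : ℝ) + 1) / ((x : ℝ) - 1))) *
              (1 / (x : ℝ)) ^ ((1 : ℝ) / ((x : ℝ) - 1)) +
            (1 / (x : ℝ)) ^ ((t - (x : ℝ) + 1) / ((x : ℝ) - 1)) *
              (1 - (1 / t) ^ (((x : ℝ) - 1) / (t - 1))) *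
              (1 / t) ^ ((1 : ℝ) / (t - 1)))
        Filter.atTop (nhds ((1 - 0) * (1 / (x : ℝ)) ^ ((1 : ℝ) / ((x : ℝ) - 1)) +
          0 * (1 - 1) * 1)) := by
      exact ((tendsto_const_nhds.sub hA).mul tendsto_const_nhds).add
        (((hA.mul (tendsto_const_nhds.sub hB))).mul hC)
    have hden : Filter.Tendsto
        (fun t : ℝ => (1 / (1 + t)) ^ ((1 : ℝ) / t) * (t / (1 + t)))
        Filter.atTop (nhds (1 * 1)) := hD.mul hE
    have := hnum.div hden (by norm_num)
    simpa [Pi.div_def] using this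
  have := main.comp (tendsto_natCast_atTop_atTop (R := ℝ))
  exact this
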